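/- Let g be an inner product (invertible symmetric bilinear form) on ℝⁿ, l a vector with g(l,l)=1, m with g(m,l)=0, ν ≠ 0 real, and m² = g(m,m) with m² + ν ≠ 0. Then the linear map A ↦ ν(A − g(l,A)l) + g(m,A)m has kernel exactly the span of l, and the map A ↦ (ν(A − g(l,A)l) + g(m,A)m, g(l,A) + g(m,A)) ∈ ℝⁿ × ℝ is injective. -/
import Mathlib


open Matrix

/-- abstract core of Lemma 3.1: for an invertible symmetric
bilinear form `g` on `ℝⁿ`, `g(l,l) = 1`, `g(m,l) = 0`, `ν ≠ 0`,
`m² + ν ≠ 0`, the map `T(A) = ν(A − g(l,A)l) + g(m,A)m` has kernel exactly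
`span {l}`, and `A ↦ (T A, g(l,A) + g(m,A))` is injective. -/
theorem augmented_operator_injective {n : ℕ} (g : Matrix (Fin n) (Fin n) ℝ)
    (hsymm : g.IsSymm) (hdet : IsUnit g.det)
    (l m : Fin n → ℝ) (ν : ℝ)
    (hll : l ⬝ᵥ (g *ᵥ l) = 1) (hml : m ⬝ᵥ (g *ᵥ l) = 0)
    (hν : ν ≠ 0) (hm2ν : m ⬝ᵥ (g *ᵥ m) + ν ≠ 0) :
    (∀ A : Fin n → ℝ,
        ν • (A - (l ⬝ᵥ (g *ᵥ A)) • l) + (m ⬝ᵥ (g *ᵥ A)) • m = 0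
          ↔ ∃ c : ℝ, A = c • l) ∧
    Function.Injective (fun A : Fin n → ℝ =>
      (ν • (A - (l ⬝ᵥ (g *ᵥ A)) • l) + (m ⬝ᵥ (g *ᵥ A)) • m,
        l ⬝ᵥ (g *ᵥ A) + m ⬝ᵥ (g *ᵥ A))) := by
  have hswap : ∀ x y : Fin n → ℝ, x ⬝ᵥ (g *ᵥ y) = y ⬝ᵥ (g *ᵥ x) := by
    intro x y
    rw [dotProduct_mulVec, ← mulVec_transpose, dotProduct_comm, hsymm.eq]
  have hlm : l ⬝ᵥ (g *ᵥ m) = 0 := by rw [hswap]; exact hml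
  have hker : ∀ A : Fin n → ℝ,
      ν • (A - (l ⬝ᵥ (g *ᵥ A)) • l) + (m ⬝ᵥ (g *ᵥ A)) • m = 0
        ↔ ∃ c : ℝ, A = c • l := by
    intro A
    constructor
    · intro hA
      have hm0 : m ⬝ᵥ (g *ᵥ A) = 0 := by
        have h := congrArg (fun v => m ⬝ᵥ (g *ᵥ v)) hA
        simp only [mulVec_add, mulVec_smul, mulVec_sub, dotProduct_add,
          dotProduct_smul, dotProduct_sub, dotProduct_zero, mulVec_zero,
          hml, smul_eq_mul, mul_zero, sub_zero] at h
        have : (m ⬝ᵥ (g *ᵥ A)) * (ν + m ⬝ᵥ (g *ᵥ m)) = 0 := by ring_nf; linarith [h]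
        rcases mul_eq_zero.mp this with h0 | h0
        · exact h0
        · exact absurd (by linarith) hm2ν
      rw [hm0, zero_smul, add_zero, smul_eq_zero] at hA
      rcases hA with h0 | h0
      · exact absurd h0 hν
      · exact ⟨l ⬝ᵥ (g *ᵥ A), sub_eq_zero.mp h0⟩
    · rintro ⟨c, rfl⟩
      simp [mulVec_smul, dotProduct_smul, hll, hml]
  refine ⟨hker, ?_⟩
  intro A B h
  simp only [Prod.mk.injEq] at h
  obtain ⟨h1, h2⟩ := h
  have key : ν • ((A - B) - (l ⬝ᵥ (g *ᵥ (A - B))) • l)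
      + (m ⬝ᵥ (g *ᵥ (A - B))) • m = 0 := by
    have hd1 : l ⬝ᵥ (g *ᵥ (A - B)) = l ⬝ᵥ (g *ᵥ A) - l ⬝ᵥ (g *ᵥ B) := by
      simp [mulVec_sub, dotProduct_sub]
    have hd2 : m ⬝ᵥ (g *ᵥ (A - B)) = m ⬝ᵥ (g *ᵥ A) - m ⬝ᵥ (g *ᵥ B) := by
      simp [mulVec_sub, dotProduct_sub]
    rw [hd1, hd2]
    have : (ν • (A - (l ⬝ᵥ (g *ᵥ A)) • l) + (m ⬝ᵥ (g *ᵥ A)) • m)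
        - (ν • (B - (l ⬝ᵥ (g *ᵥ B)) • l) + (m ⬝ᵥ (g *ᵥ B)) • m) = 0 := by
      rw [h1, sub_self]
    rw [← this]; module
  obtain ⟨c, hc⟩ := (hker (A - B)).mp key
  have hcl : l ⬝ᵥ (g *ᵥ (A - B)) = c := by
    rw [hc]; simp [mulVec_smul, dotProduct_smul, hll]
  have hcm : m ⬝ᵥ (g *ᵥ (A - B)) = 0 := by
    rw [hc]; simp [mulVec_smul, dotProduct_smul, hml]
  have hc0 : c = 0 := by
    have : l ⬝ᵥ (g *ᵥ (A - B)) + m ⬝ᵥ (g *ᵥ (A - B)) = 0 := by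
      simp [mulVec_sub, dotProduct_sub]; linarith
    rw [hcl, hcm, add_zero] at this; exact this
  have : A - B = 0 := by rw [hc, hc0, zero_smul]
  exact sub_eq_zero.mp this
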